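/- Let A ∈ ℝ^{m×n} have rank n, R_s ∈ ℝ^{n×n} invertible, E_s, E_A with ‖E_s‖·‖R_s⁻¹‖ < 1, ε_A = ‖E_A‖/‖A‖, A_p = A R_s⁻¹, A_1 = (A + E_A)(R_s + E_s)⁻¹. Let x* = A† b, and suppose ŷ ≠ 0 and x̂ ≠ 0 satisfy A_1ᵀ A_1 ŷ = A_1ᵀ b and (R_s + E_s) x̂ = ŷ. Then ‖x̂ − x*‖/‖x̂‖ ≤ κ(R_s)·κ(A_p)·ε_A · ( κ(A_p)·κ(R_s)·‖A x̂ − b‖/(‖A‖·‖x̂‖) + 1 + κ(A)·ε_A ). -/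
import Mathlib


open Matrix

/-- Spectral (operator 2-) norm of a real matrix. -/
noncomputable def spNorm {m n : ℕ} (M : Matrix (Fin m) (Fin n) ℝ) : ℝ :=
  ‖LinearMap.toContinuousLinearMap (Matrix.toEuclideanLin M)‖

/-- Euclidean 2-norm of a real vector. -/
noncomputable def vNorm {n : ℕ} (x : Fin n → ℝ) : ℝ :=
  ‖(WithLp.equiv 2 (Fin n → ℝ)).symm x‖

/-- Moore–Penrose left inverse of a full column rank matrix. -/
noncomputable def pinv {m n : ℕ} (A : Matrix (Fin m) (Fin n) ℝ) : Matrix (Fin n) (Fin m) ℝ :=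
  (Aᵀ * A)⁻¹ * Aᵀ

/-- Condition number with respect to left inversion. -/
noncomputable def kappa {m n : ℕ} (A : Matrix (Fin m) (Fin n) ℝ) : ℝ :=
  spNorm A * spNorm (pinv A)

section helpers
open scoped Matrix.Norms.L2Operator

lemma spNorm_eq {m n : ℕ} (M : Matrix (Fin m) (Fin n) ℝ) : spNorm M = ‖M‖ := rfl

lemma vNorm_mulVec_le {m n : ℕ} (M : Matrix (Fin m) (Fin n) ℝ) (v : Fin n → ℝ) :
    vNorm (M *ᵥ v) ≤ spNorm M * vNorm v :=
  M.l2_opNorm_mulVec ((WithLp.equiv 2 (Fin n → ℝ)).symm v)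

lemma spNorm_mul_le {m n k : ℕ} (M : Matrix (Fin m) (Fin n) ℝ) (N : Matrix (Fin n) (Fin k) ℝ) :
    spNorm (M * N) ≤ spNorm M * spNorm N :=
  M.l2_opNorm_mul N

lemma spNorm_transpose {m n : ℕ} (M : Matrix (Fin m) (Fin n) ℝ) : spNorm Mᵀ = spNorm M := by
  rw [spNorm_eq, spNorm_eq, ← conjTranspose_eq_transpose_of_trivial, l2_opNorm_conjTranspose]

lemma spNorm_nonneg {m n : ℕ} (M : Matrix (Fin m) (Fin n) ℝ) : 0 ≤ spNorm M := by
  rw [spNorm_eq]; exact norm_nonneg M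

lemma spNorm_pos {m n : ℕ} {M : Matrix (Fin m) (Fin n) ℝ} (h : M ≠ 0) : 0 < spNorm M := by
  rw [spNorm_eq]; exact norm_pos_iff.mpr h

lemma vNorm_nonneg {n : ℕ} (x : Fin n → ℝ) : 0 ≤ vNorm x := norm_nonneg _

lemma vNorm_pos {n : ℕ} {x : Fin n → ℝ} (h : x ≠ 0) : 0 < vNorm x := by
  unfold vNorm
  rw [norm_pos_iff]
  simpa using h

lemma vNorm_add_le {n : ℕ} (x y : Fin n → ℝ) : vNorm (x + y) ≤ vNorm x + vNorm y :=
  norm_add_le ((WithLp.equiv 2 (Fin n → ℝ)).symm x) ((WithLp.equiv 2 (Fin n → ℝ)).symm y)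

lemma vNorm_neg {n : ℕ} (x : Fin n → ℝ) : vNorm (-x) = vNorm x :=
  norm_neg ((WithLp.equiv 2 (Fin n → ℝ)).symm x)

lemma vNorm_sub_le {n : ℕ} (x y : Fin n → ℝ) : vNorm (x - y) ≤ vNorm x + vNorm y := by
  rw [sub_eq_add_neg]
  exact (vNorm_add_le x (-y)).trans (by rw [vNorm_neg])

end helpers

lemma isUnit_det_of_rank_eq {n : ℕ} {M : Matrix (Fin n) (Fin n) ℝ} (h : M.rank = n) :
    IsUnit M.det := by
  rw [← Matrix.isUnit_iff_isUnit_det M, ← Matrix.mulVec_surjective_iff_isUnit]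
  have : LinearMap.range M.mulVecLin = ⊤ := by
    apply Submodule.eq_top_of_finrank_eq
    rw [← Matrix.rank, h]
    simp [Module.finrank_pi]
  intro v
  have : v ∈ LinearMap.range M.mulVecLin := by rw [this]; trivial
  obtain ⟨u, hu⟩ := this
  exact ⟨u, hu⟩

lemma mulVec_injective_of_isUnit {n : ℕ} {M : Matrix (Fin n) (Fin n) ℝ} (h : IsUnit M.det) :
    Function.Injective M.mulVec :=
  Matrix.mulVec_injective_iff_isUnit.mpr ((Matrix.isUnit_iff_isUnit_det M).mpr h)

lemma pinv_of_isUnit {n : ℕ} {R : Matrix (Fin n) (Fin n) ℝ} (h : IsUnit R.det) :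
    pinv R = R⁻¹ := by
  have ht : IsUnit Rᵀ.det := by rwa [Matrix.det_transpose]
  rw [pinv, Matrix.mul_inv_rev, Matrix.mul_assoc, Matrix.nonsing_inv_mul _ ht, Matrix.mul_one]

lemma pinv_mul_self {m n : ℕ} {A : Matrix (Fin m) (Fin n) ℝ} (h : IsUnit (Aᵀ * A).det) :
    pinv A * A = 1 := by
  rw [pinv, Matrix.mul_assoc, Matrix.nonsing_inv_mul _ h]

lemma pinv_factor {m n : ℕ} (Ap : Matrix (Fin m) (Fin n) ℝ) (Rs : Matrix (Fin n) (Fin n) ℝ)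
    (h : IsUnit Rs.det) : pinv (Ap * Rs) = Rs⁻¹ * pinv Ap := by
  have ht : IsUnit Rsᵀ.det := by rwa [Matrix.det_transpose]
  rw [pinv, pinv, Matrix.transpose_mul]
  rw [show Rsᵀ * Apᵀ * (Ap * Rs) = Rsᵀ * (Apᵀ * Ap) * Rs by simp only [Matrix.mul_assoc]]
  rw [Matrix.mul_inv_rev, Matrix.mul_inv_rev]
  calc Rs⁻¹ * ((Apᵀ * Ap)⁻¹ * Rsᵀ⁻¹) * (Rsᵀ * Apᵀ)
      = Rs⁻¹ * ((Apᵀ * Ap)⁻¹ * (Rsᵀ⁻¹ * Rsᵀ) * Apᵀ) := by simp only [Matrix.mul_assoc]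
    _ = Rs⁻¹ * ((Apᵀ * Ap)⁻¹ * Apᵀ) := by
        rw [Matrix.nonsing_inv_mul _ ht, Matrix.mul_one]
    _ = Rs⁻¹ * ((Apᵀ * Ap)⁻¹ * Apᵀ) := rfl

lemma gram_inv_eq {m n : ℕ} {A : Matrix (Fin m) (Fin n) ℝ} (h : IsUnit (Aᵀ * A).det) :
    (Aᵀ * A)⁻¹ = pinv A * (pinv A)ᵀ := by
  have hsymm : ((Aᵀ * A)⁻¹)ᵀ = (Aᵀ * A)⁻¹ := by
    rw [Matrix.transpose_nonsing_inv, Matrix.transpose_mul, Matrix.transpose_transpose]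
  rw [pinv, Matrix.transpose_mul, Matrix.transpose_transpose, hsymm]
  calc (Aᵀ * A)⁻¹ = (Aᵀ * A)⁻¹ * ((Aᵀ * A) * (Aᵀ * A)⁻¹) := by
        rw [Matrix.mul_nonsing_inv _ h, Matrix.mul_one]
    _ = (Aᵀ * A)⁻¹ * Aᵀ * (A * (Aᵀ * A)⁻¹) := by simp only [Matrix.mul_assoc]

set_option maxHeartbeats 1000000 in
theorem stmt_6 {m n : ℕ} (A EA : Matrix (Fin m) (Fin n) ℝ) (Rs Es : Matrix (Fin n) (Fin n) ℝ)
    (b : Fin m → ℝ) (xh yh : Fin n → ℝ)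
    (hA : A.rank = n) (hR : IsUnit Rs.det) (hEs : spNorm Es * spNorm Rs⁻¹ < 1)
    (εA : ℝ) (hεA : εA = spNorm EA / spNorm A)
    (Ap : Matrix (Fin m) (Fin n) ℝ) (hAp : Ap = A * Rs⁻¹)
    (A₁ : Matrix (Fin m) (Fin n) ℝ) (hA₁ : A₁ = (A + EA) * (Rs + Es)⁻¹)
    (xs : Fin n → ℝ) (hxs : xs = pinv A *ᵥ b)
    (hy : (A₁ᵀ * A₁) *ᵥ yh = A₁ᵀ *ᵥ b)
    (hx : (Rs + Es) *ᵥ xh = yh)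
    (hyne : yh ≠ 0) (hxne : xh ≠ 0) :
    vNorm (xh - xs) / vNorm xh ≤
      kappa Rs * kappa Ap * εA *
        (kappa Ap * kappa Rs * (vNorm (A *ᵥ xh - b) / (spNorm A * vNorm xh))
          + 1 + kappa A * εA) := by
  -- basic positivity
  have hX : 0 < vNorm xh := vNorm_pos hxne
  have hAne : A ≠ 0 := by
    rintro rfl
    rw [Matrix.rank_zero] at hA
    subst hA
    exact hxne (funext fun i => i.elim0)
  have ha : 0 < spNorm A := spNorm_pos hAne
  have hAtA : IsUnit (Aᵀ * A).det :=
    isUnit_det_of_rank_eq (by rw [Matrix.rank_transpose_mul_self, hA])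
  -- Rs + Es is invertible
  have hMdet : IsUnit (Rs + Es).det := by
    rw [← Matrix.isUnit_iff_isUnit_det (Rs + Es), ← Matrix.mulVec_injective_iff_isUnit]
    intro u w huw
    by_contra hne
    have hv0 : (Rs + Es) *ᵥ (u - w) = 0 := by
      rw [Matrix.mulVec_sub, huw, sub_self]
    have hvne : u - w ≠ 0 := sub_ne_zero.mpr hne
    have hvpos : 0 < vNorm (u - w) := vNorm_pos hvne
    have h1 : Rs *ᵥ (u - w) = -(Es *ᵥ (u - w)) := by
      rw [Matrix.add_mulVec] at hv0
      linear_combination (norm := abel) hv0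
    have h2 : u - w = -(Rs⁻¹ *ᵥ (Es *ᵥ (u - w))) := by
      have : Rs⁻¹ *ᵥ (Rs *ᵥ (u - w)) = u - w := by
        rw [Matrix.mulVec_mulVec, Matrix.nonsing_inv_mul _ hR, Matrix.one_mulVec]
      conv_lhs => rw [← this, h1]
      rw [Matrix.mulVec_neg]
    have h3 : vNorm (u - w) ≤ spNorm Rs⁻¹ * (spNorm Es * vNorm (u - w)) := by
      calc vNorm (u - w) = vNorm (Rs⁻¹ *ᵥ (Es *ᵥ (u - w))) := by
            conv_lhs => rw [h2]
            rw [vNorm_neg]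
        _ ≤ spNorm Rs⁻¹ * vNorm (Es *ᵥ (u - w)) := vNorm_mulVec_le _ _
        _ ≤ spNorm Rs⁻¹ * (spNorm Es * vNorm (u - w)) :=
            mul_le_mul_of_nonneg_left (vNorm_mulVec_le _ _) (spNorm_nonneg _)
    nlinarith [hvpos, h3, hEs]
  have hMt : IsUnit ((Rs + Es)ᵀ).det := by rwa [Matrix.det_transpose]
  -- key normal equation for A + EA
  set rt : Fin m → ℝ := (A + EA) *ᵥ xh - b with hrt
  have hxy : (Rs + Es)⁻¹ *ᵥ yh = xh := by
    rw [← hx, Matrix.mulVec_mulVec, Matrix.nonsing_inv_mul _ hMdet, Matrix.one_mulVec]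
  have hA1y : A₁ *ᵥ yh = (A + EA) *ᵥ xh := by
    rw [hA₁, ← Matrix.mulVec_mulVec, hxy]
  have hkey0 : A₁ᵀ *ᵥ rt = 0 := by
    rw [hrt, Matrix.mulVec_sub, ← hA1y, Matrix.mulVec_mulVec, hy, sub_self]
  have hkey : (A + EA)ᵀ *ᵥ rt = 0 := by
    rw [hA₁, Matrix.transpose_mul, Matrix.transpose_nonsing_inv, ← Matrix.mulVec_mulVec] at hkey0
    have := congrArg ((Rs + Es)ᵀ.mulVec) hkey0
    rwa [Matrix.mulVec_mulVec, Matrix.mul_nonsing_inv _ hMt, Matrix.one_mulVec,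
      Matrix.mulVec_zero] at this
  -- the error identity
  have hxs1 : (Aᵀ * A) *ᵥ xs = Aᵀ *ᵥ b := by
    rw [hxs, pinv, Matrix.mulVec_mulVec, ← Matrix.mul_assoc,
      Matrix.mul_nonsing_inv _ hAtA, Matrix.one_mul]
  have himg : (Aᵀ * A) *ᵥ (xh - xs)
      = (Aᵀ * A) *ᵥ (-((Aᵀ * A)⁻¹ *ᵥ (EAᵀ *ᵥ rt)) - ((Aᵀ * A)⁻¹ *ᵥ (Aᵀ *ᵥ (EA *ᵥ xh)))) := by
    rw [Matrix.mulVec_sub, hxs1, Matrix.mulVec_sub, Matrix.mulVec_neg,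
      Matrix.mulVec_mulVec, Matrix.mul_nonsing_inv _ hAtA, Matrix.one_mulVec,
      Matrix.mulVec_mulVec, Matrix.mul_nonsing_inv _ hAtA, Matrix.one_mulVec]
    have h2 : Aᵀ *ᵥ rt + EAᵀ *ᵥ rt = 0 := by
      rw [← Matrix.add_mulVec, ← Matrix.transpose_add]; exact hkey
    have h3 : Aᵀ *ᵥ rt = Aᵀ *ᵥ (A *ᵥ xh) + Aᵀ *ᵥ (EA *ᵥ xh) - Aᵀ *ᵥ b := by
      rw [hrt, Matrix.mulVec_sub, Matrix.add_mulVec, Matrix.mulVec_add]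
    rw [← Matrix.mulVec_mulVec, ← sub_eq_zero, ← h2, h3]
    abel
  have hid : xh - xs = -((Aᵀ * A)⁻¹ *ᵥ (EAᵀ *ᵥ rt)) - ((Aᵀ * A)⁻¹ *ᵥ (Aᵀ *ᵥ (EA *ᵥ xh))) :=
    mulVec_injective_of_isUnit hAtA himg
  -- norm bound on the error
  have hG : spNorm ((Aᵀ * A)⁻¹) ≤ spNorm (pinv A) * spNorm (pinv A) := by
    rw [gram_inv_eq hAtA]
    calc spNorm (pinv A * (pinv A)ᵀ) ≤ spNorm (pinv A) * spNorm ((pinv A)ᵀ) := spNorm_mul_le _ _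
      _ = spNorm (pinv A) * spNorm (pinv A) := by rw [spNorm_transpose]
  have hrtb : vNorm rt ≤ vNorm (A *ᵥ xh - b) + spNorm EA * vNorm xh := by
    have : rt = (A *ᵥ xh - b) + EA *ᵥ xh := by
      rw [hrt, Matrix.add_mulVec]; abel
    rw [this]
    exact (vNorm_add_le _ _).trans (by
      have := vNorm_mulVec_le EA xh; linarith)
  have hnw : vNorm (xh - xs) ≤
      spNorm ((Aᵀ * A)⁻¹) * (spNorm EA * vNorm rt)
        + spNorm (pinv A) * (spNorm EA * vNorm xh) := by
    rw [hid]
    have t1 : vNorm ((Aᵀ * A)⁻¹ *ᵥ (EAᵀ *ᵥ rt)) ≤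
        spNorm ((Aᵀ * A)⁻¹) * (spNorm EA * vNorm rt) := by
      calc vNorm ((Aᵀ * A)⁻¹ *ᵥ (EAᵀ *ᵥ rt))
          ≤ spNorm ((Aᵀ * A)⁻¹) * vNorm (EAᵀ *ᵥ rt) := vNorm_mulVec_le _ _
        _ ≤ spNorm ((Aᵀ * A)⁻¹) * (spNorm EA * vNorm rt) := by
            apply mul_le_mul_of_nonneg_left _ (spNorm_nonneg _)
            calc vNorm (EAᵀ *ᵥ rt) ≤ spNorm EAᵀ * vNorm rt := vNorm_mulVec_le _ _
              _ = spNorm EA * vNorm rt := by rw [spNorm_transpose]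
    have t2 : vNorm ((Aᵀ * A)⁻¹ *ᵥ (Aᵀ *ᵥ (EA *ᵥ xh))) ≤
        spNorm (pinv A) * (spNorm EA * vNorm xh) := by
      have hpe : (Aᵀ * A)⁻¹ *ᵥ (Aᵀ *ᵥ (EA *ᵥ xh)) = pinv A *ᵥ (EA *ᵥ xh) := by
        rw [Matrix.mulVec_mulVec, pinv]
      rw [hpe]
      calc vNorm (pinv A *ᵥ (EA *ᵥ xh)) ≤ spNorm (pinv A) * vNorm (EA *ᵥ xh) :=
            vNorm_mulVec_le _ _
        _ ≤ spNorm (pinv A) * (spNorm EA * vNorm xh) :=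
            mul_le_mul_of_nonneg_left (vNorm_mulVec_le _ _) (spNorm_nonneg _)
    calc vNorm (-((Aᵀ * A)⁻¹ *ᵥ (EAᵀ *ᵥ rt)) - (Aᵀ * A)⁻¹ *ᵥ (Aᵀ *ᵥ (EA *ᵥ xh)))
        ≤ vNorm (-((Aᵀ * A)⁻¹ *ᵥ (EAᵀ *ᵥ rt))) + vNorm ((Aᵀ * A)⁻¹ *ᵥ (Aᵀ *ᵥ (EA *ᵥ xh))) :=
          vNorm_sub_le _ _
      _ = vNorm ((Aᵀ * A)⁻¹ *ᵥ (EAᵀ *ᵥ rt)) + vNorm ((Aᵀ * A)⁻¹ *ᵥ (Aᵀ *ᵥ (EA *ᵥ xh))) := by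
          rw [vNorm_neg]
      _ ≤ _ := add_le_add t1 t2
  -- kappa comparison
  have hArw : A = Ap * Rs := by
    rw [hAp, Matrix.mul_assoc, Matrix.nonsing_inv_mul _ hR, Matrix.mul_one]
  have hpinvRs : pinv Rs = Rs⁻¹ := pinv_of_isUnit hR
  have h1 : spNorm A ≤ spNorm Ap * spNorm Rs := by
    conv_lhs => rw [hArw]
    exact spNorm_mul_le _ _
  have hpA : pinv A = Rs⁻¹ * pinv Ap := by
    conv_lhs => rw [hArw]
    exact pinv_factor Ap Rs hR
  have h2 : spNorm (pinv A) ≤ spNorm Rs⁻¹ * spNorm (pinv Ap) := by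
    rw [hpA]; exact spNorm_mul_le _ _
  have hdc : spNorm A * spNorm (pinv A) ≤ kappa Ap * kappa Rs := by
    have hmm := mul_le_mul h1 h2 (spNorm_nonneg (pinv A))
      (mul_nonneg (spNorm_nonneg Ap) (spNorm_nonneg Rs))
    have heq : spNorm Ap * spNorm Rs * (spNorm Rs⁻¹ * spNorm (pinv Ap))
        = kappa Ap * kappa Rs := by
      rw [kappa, kappa, hpinvRs]; ring
    linarith
  -- scalar bookkeeping
  have he0 : (0:ℝ) ≤ spNorm EA := spNorm_nonneg _
  have hP0 : (0:ℝ) ≤ spNorm (pinv A) := spNorm_nonneg _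
  have hρ0 : (0:ℝ) ≤ vNorm (A *ᵥ xh - b) := vNorm_nonneg _
  have hrt0 : (0:ℝ) ≤ vNorm rt := vNorm_nonneg _
  have hG0 : (0:ℝ) ≤ spNorm ((Aᵀ * A)⁻¹) := spNorm_nonneg _
  have haX : 0 < spNorm A * vNorm xh := mul_pos ha hX
  have hu0 : 0 ≤ εA := by rw [hεA]; exact div_nonneg he0 ha.le
  have hv0' : 0 ≤ vNorm (A *ᵥ xh - b) / (spNorm A * vNorm xh) := div_nonneg hρ0 haX.le
  have hue : spNorm EA = εA * spNorm A := by
    rw [hεA]; field_simp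
  have hrv : vNorm (A *ᵥ xh - b)
      = vNorm (A *ᵥ xh - b) / (spNorm A * vNorm xh) * (spNorm A * vNorm xh) :=
    (div_mul_cancel₀ _ haX.ne').symm
  have hd0 : (0:ℝ) ≤ spNorm A * spNorm (pinv A) := mul_nonneg ha.le hP0
  rw [div_le_iff₀ hX]
  set a := spNorm A
  set P := spNorm (pinv A)
  set e := spNorm EA
  set X := vNorm xh
  set ρ := vNorm (A *ᵥ xh - b)
  set u := εA
  set v := ρ / (a * X)
  set c := kappa Ap * kappa Rs
  have hbound : vNorm (xh - xs) ≤
      X * ((a*P)*(a*P)*u*v + (a*P)*(a*P)*u*u + (a*P)*u) := by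
    have step1 : spNorm ((Aᵀ * A)⁻¹) * (e * vNorm rt) ≤ (P*P) * (e * (ρ + e*X)) := by
      nlinarith [mul_nonneg (sub_nonneg.2 hG) (mul_nonneg he0 hrt0),
        mul_nonneg (mul_nonneg (mul_nonneg hP0 hP0) he0) (sub_nonneg.2 hrtb)]
    have step2 : vNorm (xh - xs) ≤ (P*P) * (e * (ρ + e*X)) + P * (e * X) := by linarith
    calc vNorm (xh - xs) ≤ (P*P) * (e * (ρ + e*X)) + P * (e * X) := step2
      _ = X * ((a*P)*(a*P)*u*v + (a*P)*(a*P)*u*u + (a*P)*u) := by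
          rw [hue, hrv]; ring
  have hinner : (a*P)*(a*P)*u*v + (a*P)*(a*P)*u*u + (a*P)*u ≤ c*u*(c*v + 1 + (a*P)*u) := by
    nlinarith [mul_nonneg (mul_nonneg (mul_nonneg (sub_nonneg.2 hdc)
        (by linarith : (0:ℝ) ≤ c + a*P)) hu0) hv0',
      mul_nonneg (sub_nonneg.2 hdc) hu0,
      mul_nonneg (mul_nonneg (mul_nonneg hd0 (sub_nonneg.2 hdc)) hu0) hu0]
  calc vNorm (xh - xs) ≤ X * ((a*P)*(a*P)*u*v + (a*P)*(a*P)*u*u + (a*P)*u) := hbound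
    _ ≤ X * (c*u*(c*v + 1 + (a*P)*u)) := mul_le_mul_of_nonneg_left hinner hX.le
    _ = kappa Rs * kappa Ap * u * (kappa Ap * kappa Rs * v + 1 + kappa A * u) * X := by
        rw [show kappa A = a * P from rfl, show c = kappa Ap * kappa Rs from rfl]; ring
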